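/- Binomial ratio bound: if Y ~ Binomial(N, c) with N ∈ ℕ and c ∈ (0,1), then E[ Y / (1 + N − Y) ] ≤ c/(1−c). -/

import Mathlib

/-- **Binomial ratio bound**: if `Y ~ Binomial(N, c)` with `c ∈ (0,1)`, then
`E[ Y / (1 + N - Y) ] ≤ c / (1 - c)`.  The expectation is written out explicitly
as a sum over the binomial distribution. -/
theorem binomial_ratio_bound (N : ℕ) (c : ℝ) (hc0 : 0 < c) (hc1 : c < 1) :
    ∑ i ∈ Finset.range (N + 1),
        (N.choose i : ℝ) * c ^ i * (1 - c) ^ (N - i) * ((i : ℝ) / (1 + (N : ℝ) - (i : ℝ)))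
      ≤ c / (1 - c) := by
  have hc1' : (0:ℝ) < 1 - c := by linarith
  rw [Finset.sum_range_succ']
  simp only [Nat.cast_zero, zero_div, mul_zero, add_zero]
  have key : ∀ i ∈ Finset.range N,
      (N.choose (i+1) : ℝ) * c ^ (i+1) * (1 - c) ^ (N - (i+1)) *
        ((↑(i+1) : ℝ) / (1 + (N : ℝ) - (↑(i+1) : ℝ)))
      = (c / (1 - c)) * ((N.choose i : ℝ) * c ^ i * (1 - c) ^ (N - i)) := by
    intro i hi
    rw [Finset.mem_range] at hi
    have hiN : i + 1 ≤ N := hi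
    have hchoose : (N.choose (i+1) : ℝ) * (↑(i+1) : ℝ) = (N.choose i : ℝ) * ((N : ℝ) - i) := by
      have := Nat.choose_succ_right_eq N i
      have hcast : ((N.choose (i+1) * (i+1) : ℕ) : ℝ) = ((N.choose i * (N - i) : ℕ) : ℝ) := by
        exact_mod_cast congrArg (Nat.cast : ℕ → ℝ) this
      push_cast [Nat.cast_sub hi.le] at hcast
      push_cast
      linarith [hcast]
    have hpow : (1 - c) ^ (N - i) = (1 - c) ^ (N - (i+1)) * (1 - c) := by
      rw [← pow_succ]
      congr 1
      omega
    have hden : 1 + (N : ℝ) - (↑(i+1) : ℝ) = (N : ℝ) - i := by push_cast; ring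
    have hdenne : (N : ℝ) - i ≠ 0 := by
      have : (i : ℝ) < N := by exact_mod_cast hi
      linarith
    rw [hden, hpow]
    push_cast at hchoose ⊢
    field_simp
    linear_combination (c^(i+1)) * hchoose
  rw [Finset.sum_congr rfl key, ← Finset.mul_sum]
  have hsum : ∑ i ∈ Finset.range N, (N.choose i : ℝ) * c ^ i * (1 - c) ^ (N - i) ≤ 1 := by
    have hfull : ∑ i ∈ Finset.range (N+1), (N.choose i : ℝ) * c ^ i * (1 - c) ^ (N - i) = 1 := by
      have := add_pow c (1-c) N
      simp only [add_sub_cancel, one_pow] at this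
      exact (Finset.sum_congr rfl fun i _ => by ring).trans this.symm
    have hlast : (0:ℝ) ≤ (N.choose N : ℝ) * c ^ N * (1 - c) ^ (N - N) :=
      mul_nonneg (mul_nonneg (by positivity) (by positivity)) (by positivity)
    rw [Finset.sum_range_succ] at hfull
    linarith
  have hfrac : 0 ≤ c / (1 - c) := by positivity
  calc c / (1 - c) * ∑ i ∈ Finset.range N, (N.choose i : ℝ) * c ^ i * (1 - c) ^ (N - i)
      ≤ c / (1 - c) * 1 := by exact mul_le_mul_of_nonneg_left hsum hfrac
    _ = c / (1 - c) := mul_one _
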